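/- A single-row sequence of red and blue beads with equally many red and blue beads has at least two distinct non-crossing matchings whenever it contains a (not necessarily contiguous) subsequence of colors red, blue, red, blue or of colors blue, red, blue, red. -/

import Mathlib

/-- A bead is colored red or blue. -/
inductive Color : Type
  | red
  | blue
  deriving DecidableEq

/-- A perfect matching of the beads of a single-row bead word `w`, encoded as a
fixed-point-free involution on positions, in which every matched pair consists of
beads of different colors (one red, one blue). -/
structure Matching (w : List Color) where
  pair : Fin w.length → Fin w.length
  invol : ∀ i, pair (pair i) = i
  ne : ∀ i, pair i ≠ i
  colorOK : ∀ i, w.get i ≠ w.get (pair i)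

/-- A matching is non-crossing if there are no matched pairs `{i,k}`, `{j,l}`
with `i < j < k < l`. -/
def NonCrossing {w : List Color} (m : Matching w) : Prop :=
  ∀ i j : Fin w.length, ¬ (i < j ∧ j < m.pair i ∧ m.pair i < m.pair j)

def oth : Color → Color
  | Color.red => Color.blue
  | Color.blue => Color.red

lemma oth_ne (c : Color) : oth c ≠ c := by cases c <;> simp [oth]

lemma eq_oth_of_ne {c d : Color} (h : d ≠ c) : d = oth c := by
  cases c <;> cases d <;> simp_all [oth]

lemma oth_oth (c : Color) : oth (oth c) = c := by cases c <;> rfl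

lemma matching_ne {w : List Color} {m₁ m₂ : Matching w} (i : Fin w.length)
    (h : m₁.pair i ≠ m₂.pair i) : m₁ ≠ m₂ := by
  intro he; subst he; exact h rfl

lemma m_exists_pair_ne {w : List Color} {m₁ m₂ : Matching w} (h : m₁ ≠ m₂) :
    ∃ i, m₁.pair i ≠ m₂.pair i := by
  by_contra hc
  push_neg at hc
  apply h
  cases m₁; cases m₂
  simp only [Matching.mk.injEq]
  exact funext hc

section Lift

variable (u v : List Color) (a b : Color)

lemma lenw : (u ++ a :: b :: v).length = u.length + v.length + 2 := by
  simp [List.length_append]; omega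

lemma lenuv : (u ++ v).length = u.length + v.length := List.length_append

lemma get_low {k : ℕ} (h : k < u.length) {h1 : k < (u ++ a :: b :: v).length}
    {h2 : k < (u ++ v).length} :
    (u ++ a :: b :: v)[k]'h1 = (u ++ v)[k]'h2 := by
  rw [List.getElem_append_left h, List.getElem_append_left h]

lemma get_mid_a {h1 : u.length < (u ++ a :: b :: v).length} :
    (u ++ a :: b :: v)[u.length]'h1 = a := by
  rw [List.getElem_append_right (le_refl _)]
  simp

lemma get_mid_b {h1 : u.length + 1 < (u ++ a :: b :: v).length} :
    (u ++ a :: b :: v)[u.length + 1]'h1 = b := by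
  rw [List.getElem_append_right (by omega)]
  simp

lemma get_high {k : ℕ} (h : u.length + 2 ≤ k) {h1 : k < (u ++ a :: b :: v).length}
    {h2 : k - 2 < (u ++ v).length} :
    (u ++ a :: b :: v)[k]'h1 = (u ++ v)[k - 2]'h2 := by
  have e1 : (u ++ a :: b :: v)[k]? = (a :: b :: v)[k - u.length]? := by
    rw [List.getElem?_append_right (by omega)]
  have e2 : (u ++ v)[k - 2]? = v[k - 2 - u.length]? := by
    rw [List.getElem?_append_right (by omega)]
  obtain ⟨m, hm⟩ : ∃ m, k - u.length = m + 2 := ⟨k - u.length - 2, by omega⟩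
  rw [hm] at e1
  simp only [List.getElem?_cons_succ] at e1
  have hm2 : k - 2 - u.length = m := by omega
  rw [hm2] at e2
  rw [List.getElem?_eq_getElem h1] at e1
  rw [List.getElem?_eq_getElem h2] at e2
  rw [List.getElem?_eq_getElem (by have := h2; rw [lenuv] at this; omega : m < v.length)] at e1 e2
  simp only [Option.some.injEq] at e1 e2
  rw [e1, e2]

end Lift

section Lift2

variable (u v : List Color) (a b : Color)

/-- shift an index of `u ++ v` to the corresponding index of `u ++ a :: b :: v`. -/
def shiftN (u : List Color) (j : ℕ) : ℕ := if j < u.length then j else j + 2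

lemma shift_lt_shift {u : List Color} {x y : ℕ} : shiftN u x < shiftN u y ↔ x < y := by
  unfold shiftN; split_ifs <;> omega

lemma shift_ne_marker0 (u : List Color) (j : ℕ) : shiftN u j ≠ u.length := by
  unfold shiftN; split_ifs <;> omega

lemma shift_ne_marker1 (u : List Color) (j : ℕ) : shiftN u j ≠ u.length + 1 := by
  unfold shiftN; split_ifs <;> omega

/-- ℕ-level version of the pairing function of a matching on `u ++ v`. -/
def pairN {w : List Color} (M : Matching w) (k : ℕ) : ℕ :=
  if h : k < w.length then (M.pair ⟨k, h⟩).1 else 0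

lemma pairN_lt {w : List Color} (M : Matching w) {k : ℕ} (hk : k < w.length) :
    pairN M k < w.length := by
  unfold pairN; rw [dif_pos hk]; exact (M.pair ⟨k, hk⟩).isLt

lemma pairN_pairN {w : List Color} (M : Matching w) {k : ℕ} (hk : k < w.length) :
    pairN M (pairN M k) = k := by
  unfold pairN
  rw [dif_pos hk, dif_pos (M.pair ⟨k, hk⟩).isLt]
  rw [Fin.eta (M.pair ⟨k, hk⟩) (M.pair ⟨k, hk⟩).isLt, M.invol]

lemma pairN_ne {w : List Color} (M : Matching w) {k : ℕ} (hk : k < w.length) :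
    pairN M k ≠ k := by
  unfold pairN
  rw [dif_pos hk]
  intro h
  exact M.ne ⟨k, hk⟩ (Fin.ext h)

lemma pairN_color {w : List Color} (M : Matching w) {k : ℕ} (hk : k < w.length)
    {hk2 : pairN M k < w.length} :
    w[k]'hk ≠ w[pairN M k]'hk2 := by
  have := M.colorOK ⟨k, hk⟩
  simp only [List.get_eq_getElem] at this
  intro h
  apply this
  rw [h]
  congr 1
  unfold pairN
  rw [dif_pos hk]

lemma pairN_noncross {w : List Color} (M : Matching w) (hM : NonCrossing M)
    {x y : ℕ} (hx : x < w.length) (hy : y < w.length) :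
    ¬ (x < y ∧ y < pairN M x ∧ pairN M x < pairN M y) := by
  have := hM ⟨x, hx⟩ ⟨y, hy⟩
  simp only [Fin.lt_def] at this
  unfold pairN
  rw [dif_pos hx, dif_pos hy]
  exact this

def liftPairN (M : Matching (u ++ v)) (k : ℕ) : ℕ :=
  if k = u.length then u.length + 1
  else if k = u.length + 1 then u.length
  else if k < u.length then shiftN u (pairN M k)
  else shiftN u (pairN M (k - 2))

lemma liftPairN_lt (M : Matching (u ++ v)) {k : ℕ} (hk : k < u.length + v.length + 2) :
    liftPairN u v M k < u.length + v.length + 2 := by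
  have hL : (u ++ v).length = u.length + v.length := lenuv u v
  unfold liftPairN shiftN
  split_ifs with h1 h2 h3 h4 h5 h6
  · omega
  · omega
  · have := pairN_lt M (k := k) (by omega); omega
  · have := pairN_lt M (k := k) (by omega); omega
  · have := pairN_lt M (k := k - 2) (by omega); omega
  · have := pairN_lt M (k := k - 2) (by omega); omega

/-- key composite: lifting commutes with shifting -/
lemma liftPairN_shift (M : Matching (u ++ v)) {j : ℕ} (hj : j < (u ++ v).length) :
    liftPairN u v M (shiftN u j) = shiftN u (pairN M j) := by
  have hL : (u ++ v).length = u.length + v.length := lenuv u v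
  by_cases h : j < u.length
  · have hs : shiftN u j = j := by unfold shiftN; rw [if_pos h]
    rw [hs]
    unfold liftPairN
    rw [if_neg (by omega), if_neg (by omega), if_pos h]
  · have hs : shiftN u j = j + 2 := by unfold shiftN; rw [if_neg h]
    rw [hs]
    unfold liftPairN
    rw [if_neg (by omega), if_neg (by omega), if_neg (by omega)]
    have h22 : j + 2 - 2 = j := by omega
    rw [h22]

lemma liftPairN_marker0 (M : Matching (u ++ v)) :
    liftPairN u v M u.length = u.length + 1 := by unfold liftPairN; simp

lemma liftPairN_marker1 (M : Matching (u ++ v)) :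
    liftPairN u v M (u.length + 1) = u.length := by
  unfold liftPairN
  rw [if_neg (by omega), if_pos rfl]

/-- representation of non-marker indices -/
lemma nonmarker_rep {u v : List Color} {k : ℕ} (hk : k < u.length + v.length + 2)
    (h0 : k ≠ u.length) (h1 : k ≠ u.length + 1) :
    ∃ j : ℕ, j < (u ++ v).length ∧ k = shiftN u j := by
  have hL : (u ++ v).length = u.length + v.length := lenuv u v
  by_cases h : k < u.length
  · exact ⟨k, by omega, by unfold shiftN; rw [if_pos h]⟩
  · refine ⟨k - 2, by omega, ?_⟩
    unfold shiftN
    rw [if_neg (by omega)]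
    omega

end Lift2

section Lift3

variable (u v : List Color) (a b : Color)

lemma shift_inj {u : List Color} {x y : ℕ} (h : shiftN u x = shiftN u y) : x = y := by
  unfold shiftN at h; split_ifs at h <;> omega

lemma gidx {l : List Color} {k k' : ℕ} (h : k = k') {hk : k < l.length} :
    l[k]'hk = l[k']'(h ▸ hk) := by subst h; rfl

lemma get_shift {j : ℕ} (hj : j < (u ++ v).length)
    {h1 : shiftN u j < (u ++ a :: b :: v).length} :
    (u ++ a :: b :: v)[shiftN u j]'h1 = (u ++ v)[j]'hj := by
  have hL : (u ++ v).length = u.length + v.length := lenuv u v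
  apply Option.some.inj
  rw [← List.getElem?_eq_getElem, ← List.getElem?_eq_getElem]
  by_cases h : j < u.length
  · have hs : shiftN u j = j := by unfold shiftN; rw [if_pos h]
    rw [hs, List.getElem?_append_left h, List.getElem?_append_left h]
  · have hs : shiftN u j = j + 2 := by unfold shiftN; rw [if_neg h]
    rw [hs, List.getElem?_append_right (by omega : u.length ≤ j + 2),
      List.getElem?_append_right (by omega : u.length ≤ j)]
    have h2 : j + 2 - u.length = (j - u.length) + 2 := by omega
    rw [h2]
    simp only [List.getElem?_cons_succ]

lemma pairN_eq_val {w : List Color} (M : Matching w) (i : Fin w.length) :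
    pairN M i.1 = (M.pair i).1 := by
  unfold pairN
  rw [dif_pos i.isLt, Fin.eta]

def liftMat (hab : a ≠ b) (M : Matching (u ++ v)) : Matching (u ++ a :: b :: v) where
  pair i := ⟨liftPairN u v M i.1, by
    have hL := lenw u v a b
    have hi := i.isLt
    have := liftPairN_lt u v M (k := i.1) (by omega)
    omega⟩
  invol i := by
    apply Fin.ext
    show liftPairN u v M (liftPairN u v M i.1) = i.1
    have hk : i.1 < u.length + v.length + 2 := by have hL := lenw u v a b; have := i.isLt; omega
    by_cases h0 : i.1 = u.length
    · rw [h0, liftPairN_marker0, liftPairN_marker1]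
    by_cases h1 : i.1 = u.length + 1
    · rw [h1, liftPairN_marker1, liftPairN_marker0]
    obtain ⟨j, hj, hrep⟩ := nonmarker_rep hk h0 h1
    rw [hrep, liftPairN_shift u v M hj, liftPairN_shift u v M (pairN_lt M hj),
      pairN_pairN M hj]
  ne i := by
    intro hcon
    have hval : liftPairN u v M i.1 = i.1 := congrArg Fin.val hcon
    have hk : i.1 < u.length + v.length + 2 := by have hL := lenw u v a b; have := i.isLt; omega
    by_cases h0 : i.1 = u.length
    · rw [h0, liftPairN_marker0] at hval; omega
    by_cases h1 : i.1 = u.length + 1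
    · rw [h1, liftPairN_marker1] at hval; omega
    obtain ⟨j, hj, hrep⟩ := nonmarker_rep hk h0 h1
    rw [hrep, liftPairN_shift u v M hj] at hval
    exact pairN_ne M hj (shift_inj hval)
  colorOK i := by
    simp only [List.get_eq_getElem]
    show (u ++ a :: b :: v)[i.1] ≠ (u ++ a :: b :: v)[liftPairN u v M i.1]'_
    have hk : i.1 < u.length + v.length + 2 := by have hL := lenw u v a b; have := i.isLt; omega
    by_cases h0 : i.1 = u.length
    · rw [gidx (l := u ++ a :: b :: v) h0,
        gidx (l := u ++ a :: b :: v) (show liftPairN u v M i.1 = u.length + 1 by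
          rw [h0, liftPairN_marker0])]
      rw [get_mid_a, get_mid_b]
      exact hab
    by_cases h1 : i.1 = u.length + 1
    · rw [gidx (l := u ++ a :: b :: v) h1,
        gidx (l := u ++ a :: b :: v) (show liftPairN u v M i.1 = u.length by
          rw [h1, liftPairN_marker1])]
      rw [get_mid_a, get_mid_b]
      exact hab.symm
    obtain ⟨j, hj, hrep⟩ := nonmarker_rep hk h0 h1
    rw [gidx (l := u ++ a :: b :: v) hrep,
      gidx (l := u ++ a :: b :: v) (show liftPairN u v M i.1 = shiftN u (pairN M j) by
        rw [hrep, liftPairN_shift u v M hj])]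
    rw [get_shift u v a b hj, get_shift u v a b (pairN_lt M hj)]
    exact pairN_color M hj

end Lift3

section Lift4

variable (u v : List Color) (a b : Color)

lemma liftMat_pair_val (hab : a ≠ b) (M : Matching (u ++ v))
    (i : Fin (u ++ a :: b :: v).length) :
    ((liftMat u v a b hab M).pair i).1 = liftPairN u v M i.1 := rfl

lemma liftMat_noncross (hab : a ≠ b) (M : Matching (u ++ v)) (hM : NonCrossing M) :
    NonCrossing (liftMat u v a b hab M) := by
  rintro i j ⟨h1, h2, h3⟩
  rw [Fin.lt_def] at h1 h2 h3
  simp only [liftMat_pair_val] at h2 h3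
  have hL := lenw u v a b
  have hki : i.1 < u.length + v.length + 2 := by have := i.isLt; omega
  have hkj : j.1 < u.length + v.length + 2 := by have := j.isLt; omega
  by_cases hi0 : i.1 = u.length
  · rw [hi0] at h1; rw [hi0, liftPairN_marker0] at h2; omega
  by_cases hi1 : i.1 = u.length + 1
  · rw [hi1] at h1; rw [hi1, liftPairN_marker1] at h2; omega
  by_cases hj0 : j.1 = u.length
  · rw [hj0] at h2; rw [hj0, liftPairN_marker0] at h3; omega
  by_cases hj1 : j.1 = u.length + 1
  · rw [hj1] at h2; rw [hj1, liftPairN_marker1] at h3; omega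
  obtain ⟨ji, hji, hrepi⟩ := nonmarker_rep hki hi0 hi1
  obtain ⟨jj, hjj, hrepj⟩ := nonmarker_rep hkj hj0 hj1
  rw [hrepi, hrepj] at h1
  rw [hrepi, hrepj, liftPairN_shift u v M hji] at h2
  rw [hrepi, hrepj, liftPairN_shift u v M hji, liftPairN_shift u v M hjj] at h3
  rw [shift_lt_shift] at h1 h2 h3
  exact pairN_noncross M hM hji hjj ⟨h1, h2, h3⟩

lemma liftMat_pair_marker (hab : a ≠ b) (M : Matching (u ++ v))
    (h : u.length < (u ++ a :: b :: v).length)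
    (h' : u.length + 1 < (u ++ a :: b :: v).length) :
    (liftMat u v a b hab M).pair ⟨u.length, h⟩ = ⟨u.length + 1, h'⟩ := by
  apply Fin.ext
  exact liftPairN_marker0 u v M

lemma liftMat_ne (hab : a ≠ b) {M₁ M₂ : Matching (u ++ v)} (h : M₁ ≠ M₂) :
    liftMat u v a b hab M₁ ≠ liftMat u v a b hab M₂ := by
  obtain ⟨i, hi⟩ := m_exists_pair_ne h
  have hL := lenw u v a b
  have hLuv := lenuv u v
  have hib := i.isLt
  apply matching_ne (i := ⟨shiftN u i.1, by unfold shiftN; split_ifs <;> omega⟩)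
  intro hcon
  have hval := congrArg Fin.val hcon
  rw [liftMat_pair_val, liftMat_pair_val] at hval
  simp only [liftPairN_shift u v _ hib] at hval
  rw [pairN_eq_val, pairN_eq_val] at hval
  exact hi (Fin.ext (shift_inj hval))

end Lift4

section Exist

lemma decomp (w : List Color) (t : ℕ) (h : t + 2 ≤ w.length) :
    w = w.take t ++ w[t]'(by omega) :: w[t+1]'(by omega) :: w.drop (t+2) := by
  conv_lhs => rw [← List.take_append_drop t w]
  congr 1
  rw [List.drop_eq_getElem_cons (by omega : t < w.length)]
  congr 1
  rw [List.drop_eq_getElem_cons (by omega : t + 1 < w.length)]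

lemma take_len (w : List Color) (t : ℕ) (h : t + 2 ≤ w.length) :
    (w.take t).length = t := by simp; omega

lemma balance_decomp {u v : List Color} {x y : Color} (hxy : x ≠ y)
    (h : (u ++ x :: y :: v).count Color.red = (u ++ x :: y :: v).count Color.blue) :
    (u ++ v).count Color.red = (u ++ v).count Color.blue := by
  simp only [List.count_append, List.count_cons] at *
  cases x <;> cases y <;> simp_all <;> omega

lemma change_between (w : List Color) :
    ∀ j, ∀ i, ∀ (hi : i < w.length) (hj : j < w.length), i < j → w[i] ≠ w[j] →
      ∃ t, t + 2 ≤ w.length ∧ w[t]? ≠ w[t+1]? := by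
  intro j
  induction j using Nat.strong_induction_on with
  | _ j IH =>
  intro i hi hj hij hne
  by_cases hstep : w[j-1]'(by omega) = w[j]
  · have hij1 : i < j - 1 := by
      rcases Nat.lt_or_ge i (j-1) with h | h
      · exact h
      · exfalso
        have : i = j - 1 := by omega
        subst this
        exact hne hstep
    exact IH (j-1) (by omega) i hi (by omega) hij1 (by rw [hstep]; exact hne)
  · refine ⟨j - 1, by omega, ?_⟩
    have e : j - 1 + 1 = j := by omega
    rw [e, List.getElem?_eq_getElem (by omega : j - 1 < w.length),
      List.getElem?_eq_getElem hj]
    simp only [ne_eq, Option.some.injEq]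
    exact hstep

lemma exists_change (w : List Color) (hw : w ≠ [])
    (hbal : w.count Color.red = w.count Color.blue) :
    ∃ t, t + 2 ≤ w.length ∧ w[t]? ≠ w[t+1]? := by
  have hred : Color.red ∈ w := by
    by_contra h
    have h0 : w.count Color.red = 0 := List.count_eq_zero.2 h
    rw [h0] at hbal
    have hb : Color.blue ∉ w := List.count_eq_zero.1 hbal.symm
    apply hw
    apply List.eq_nil_iff_forall_not_mem.2
    intro x hx
    cases x
    · exact h hx
    · exact hb hx
  have hblue : Color.blue ∈ w := by
    by_contra h
    have h0 : w.count Color.blue = 0 := List.count_eq_zero.2 h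
    rw [h0] at hbal
    have hb : Color.red ∉ w := List.count_eq_zero.1 hbal
    apply hw
    apply List.eq_nil_iff_forall_not_mem.2
    intro x hx
    cases x
    · exact hb hx
    · exact h hx
  obtain ⟨ir, hir, hgr⟩ := List.mem_iff_getElem.1 hred
  obtain ⟨ib, hib, hgb⟩ := List.mem_iff_getElem.1 hblue
  rcases Nat.lt_trichotomy ir ib with h | h | h
  · exact change_between w ib ir hir hib h (by rw [hgr, hgb]; simp)
  · exfalso; subst h; rw [hgr] at hgb; exact Color.noConfusion hgb
  · exact change_between w ir ib hib hir h (by rw [hgr, hgb]; simp)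

lemma EX : ∀ (n : ℕ) (w : List Color), w.length = n →
    w.count Color.red = w.count Color.blue → ∃ M : Matching w, NonCrossing M := by
  intro n
  induction n using Nat.strong_induction_on with
  | _ n IH =>
  intro w hlen hbal
  by_cases hw : w = []
  · subst hw
    refine ⟨⟨fun i => i, ?_, ?_, ?_⟩, ?_⟩
    · intro i; exact absurd i.isLt (by simp)
    · intro i; exact absurd i.isLt (by simp)
    · intro i; exact absurd i.isLt (by simp)
    · intro i; exact absurd i.isLt (by simp)
  · obtain ⟨t, ht, hne⟩ := exists_change w hw hbal
    have hx : t < w.length := by omega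
    have hy : t + 1 < w.length := by omega
    have hxy : w[t]'hx ≠ w[t+1]'hy := by
      intro hcon
      apply hne
      rw [List.getElem?_eq_getElem hx, List.getElem?_eq_getElem hy, hcon]
    have hd := decomp w t ht
    rw [hd] at hbal ⊢
    have hlen2 : (w.take t ++ w.drop (t+2)).length = n - 2 := by
      simp only [List.length_append, List.length_take, List.length_drop]
      omega
    obtain ⟨M, hM⟩ := IH (n - 2) (by omega) (w.take t ++ w.drop (t+2)) hlen2
      (balance_decomp hxy hbal)
    exact ⟨liftMat _ _ _ _ hxy M, liftMat_noncross _ _ _ _ hxy M hM⟩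

end Exist

section CaseA

lemma matching_ne_pairN {w : List Color} {m₁ m₂ : Matching w} (k : ℕ)
    (h : pairN m₁ k ≠ pairN m₂ k) : m₁ ≠ m₂ := fun he => h (by rw [he])

lemma liftMat_pairN_marker (u v : List Color) (a b : Color) (hab : a ≠ b)
    (M : Matching (u ++ v)) :
    pairN (liftMat u v a b hab M) u.length = u.length + 1 := by
  unfold pairN
  rw [dif_pos (by rw [lenw]; omega)]
  exact liftPairN_marker0 u v M

lemma buildAdj (w : List Color) (hbal : w.count Color.red = w.count Color.blue)
    (t : ℕ) (ht : t + 2 ≤ w.length)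
    (hne : w[t]'(by omega) ≠ w[t+1]'(by omega)) :
    ∃ m : Matching w, NonCrossing m ∧ pairN m t = t + 1 := by
  have hd := decomp w t ht
  have hT : (w.take t).length = t := take_len w t ht
  rw [hd] at hbal ⊢
  obtain ⟨M, hM⟩ := EX _ (w.take t ++ w.drop (t+2)) rfl (balance_decomp hne hbal)
  refine ⟨liftMat _ _ _ _ hne M, liftMat_noncross _ _ _ _ hne M hM, ?_⟩
  have := liftMat_pairN_marker (w.take t) (w.drop (t+2)) _ _ hne M
  rw [hT] at this
  exact this

lemma caseA (w : List Color) (hbal : w.count Color.red = w.count Color.blue)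
    (p : ℕ) (hp : p + 3 ≤ w.length)
    (h1 : w[p]'(by omega) ≠ w[p+1]'(by omega))
    (h2 : w[p+1]'(by omega) ≠ w[p+2]'(by omega)) :
    ∃ m₁ m₂ : Matching w, NonCrossing m₁ ∧ NonCrossing m₂ ∧ m₁ ≠ m₂ := by
  obtain ⟨m₁, hm₁, hp₁⟩ := buildAdj w hbal p (by omega) h1
  obtain ⟨m₂, hm₂, hp₂⟩ := buildAdj w hbal (p+1) (by omega) h2
  refine ⟨m₁, m₂, hm₁, hm₂, ?_⟩
  apply matching_ne_pairN (p+1)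
  have e₂ : pairN m₁ (p+1) = p := by
    have := pairN_pairN m₁ (k := p) (by omega)
    rw [hp₁] at this
    exact this
  rw [e₂, hp₂]
  omega

end CaseA

section Main

lemma glist {l l' : List Color} (h : l = l') {k : ℕ} {hk : k < l.length} :
    l[k]'hk = l'[k]'(h ▸ hk) := by subst h; rfl

lemma neq_of_q {w : List Color} {k l : ℕ} (hk : k < w.length) (hl : l < w.length)
    (h : w[k]? ≠ w[l]?) : w[k]'hk ≠ w[l]'hl := by
  intro hc
  apply h
  rw [List.getElem?_eq_getElem hk, List.getElem?_eq_getElem hl, hc]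

lemma q_of_neq {w : List Color} {k l : ℕ} (hk : k < w.length) (hl : l < w.length)
    (h : w[k]'hk ≠ w[l]'hl) : w[k]? ≠ w[l]? := by
  rw [List.getElem?_eq_getElem hk, List.getElem?_eq_getElem hl]
  simp only [ne_eq, Option.some.injEq]
  exact h

lemma trans_low (w : List Color) (t : ℕ) (ht : t + 2 ≤ w.length) {k : ℕ} (hk : k < t)
    {h2 : k < (w.take t ++ w.drop (t+2)).length} :
    (w.take t ++ w.drop (t+2))[k]'h2 = w[k]'(by omega) := by
  have hd := decomp w t ht
  have hT := take_len w t ht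
  rw [glist hd (k := k) (hk := by omega)]
  exact (get_low (w.take t) (w.drop (t+2)) _ _ (by omega)).symm

lemma trans_high (w : List Color) (t : ℕ) (ht : t + 2 ≤ w.length) {k : ℕ}
    (hk : t + 2 ≤ k) (hk2 : k < w.length)
    {h2 : k - 2 < (w.take t ++ w.drop (t+2)).length} :
    (w.take t ++ w.drop (t+2))[k - 2]'h2 = w[k]'(by omega) := by
  have hd := decomp w t ht
  have hT := take_len w t ht
  rw [glist hd (k := k) (hk := by omega)]
  exact (get_high (w.take t) (w.drop (t+2)) _ _ (by omega)).symm

lemma e_of_q {w : List Color} {k : ℕ} {c : Color} (hk : k < w.length)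
    (h : w[k]? = some c) : w[k]'hk = c := by
  rw [List.getElem?_eq_getElem hk] at h
  exact Option.some.inj h

lemma main' : ∀ (n : ℕ) (w : List Color), w.length = n →
    w.count Color.red = w.count Color.blue →
    ∀ (c : Color) (i1 i2 i3 i4 : ℕ) (h12 : i1 < i2) (h23 : i2 < i3) (h34 : i3 < i4)
      (h4 : i4 < w.length),
      w[i1]'(by omega) = c → w[i2]'(by omega) = oth c → w[i3]'(by omega) = c →
      w[i4]'(by omega) = oth c →
      ∃ m₁ m₂ : Matching w, NonCrossing m₁ ∧ NonCrossing m₂ ∧ m₁ ≠ m₂ := by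
  intro n
  induction n using Nat.strong_induction_on with
  | _ n IH =>
  intro w hlen hbal c i1 i2 i3 i4 h12 h23 h34 h4 g1 g2 g3 g4
  by_cases hA : ∃ p, p + 3 ≤ w.length ∧ w[p]? ≠ w[p+1]? ∧ w[p+1]? ≠ w[p+2]?
  · obtain ⟨p, hp, ha, hb⟩ := hA
    have hb1 : p < w.length := by omega
    have hb2 : p + 1 < w.length := by omega
    have hb3 : p + 2 < w.length := by omega
    exact caseA w hbal p hp (neq_of_q hb1 hb2 ha) (neq_of_q hb2 hb3 hb)
  · have hAA : ∀ p (hp : p + 3 ≤ w.length), w[p]'(by omega) ≠ w[p+1]'(by omega) →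
        w[p+1]'(by omega) = w[p+2]'(by omega) := by
      intro p hp hne
      by_contra hne2
      exact hA ⟨p, hp, q_of_neq (by omega) (by omega) hne,
        q_of_neq (by omega) (by omega) hne2⟩
    -- find the change point t
    have hex : ∃ k, i2 < k ∧ w[k]? = some c := by
      refine ⟨i3, h23, ?_⟩
      rw [List.getElem?_eq_getElem (by omega), g3]
    obtain ⟨hk0a, hk0b⟩ := Nat.find_spec hex
    have hk0min : Nat.find hex ≤ i3 := Nat.find_min' hex
      ⟨h23, by rw [List.getElem?_eq_getElem (by omega), g3]⟩
    set t := Nat.find hex - 1 with htdef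
    have hi21 : 1 ≤ i2 := by omega
    have ht2 : i2 ≤ t := by omega
    have htk0 : t + 1 = Nat.find hex := by omega
    have htlen : t + 3 ≤ w.length := by omega
    have hwt1 : w[t+1]'(by omega) = c := by
      have := hk0b
      rw [← htk0, List.getElem?_eq_getElem (by omega)] at this
      exact Option.some.inj this
    have hwt : w[t]'(by omega) = oth c := by
      rcases Nat.lt_or_ge i2 t with h | h
      · have hmin := Nat.find_min hex (m := t) (by omega)
        push_neg at hmin
        have := hmin h
        apply eq_oth_of_ne
        intro hc
        apply this
        rw [List.getElem?_eq_getElem (by omega), hc]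
      · have : i2 = t := by omega
        rw [gidx (l := w) this.symm]
        exact g2
    have hchg : w[t]'(by omega) ≠ w[t+1]'(by omega) := by
      rw [hwt, hwt1]
      exact oth_ne c
    -- left neighbor
    have hleft : w[t-1]'(by omega) = w[t]'(by omega) := by
      by_contra hne
      have := hAA (t-1) (by omega) (by
        have e1 : t - 1 + 1 = t := by omega
        rw [gidx (l := w) e1]
        exact hne)
      have e1 : t - 1 + 1 = t := by omega
      have e2 : t - 1 + 2 = t + 1 := by omega
      rw [gidx (l := w) e1, gidx (l := w) e2] at this
      exact hchg this
    have hi1t : i2 = t → i1 < t - 1 := by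
      intro hi2t
      rcases Nat.lt_or_ge i1 (t-1) with h | h
      · exact h
      · exfalso
        have hi1 : i1 = t - 1 := by omega
        rw [gidx (l := w) hi1, hleft, hwt] at g1
        exact oth_ne c g1
    -- the decomposition
    have hd := decomp w t (by omega)
    have hT := take_len w t (by omega)
    have hlenuv : (w.take t ++ w.drop (t+2)).length = n - 2 := by
      simp only [List.length_append, List.length_take, List.length_drop]
      omega
    have hbal' : (w.take t ++ w.drop (t+2)).count Color.red
        = (w.take t ++ w.drop (t+2)).count Color.blue := by
      rw [hd] at hbal
      exact balance_decomp hchg hbal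
    -- pattern indices in the reduced word
    -- j1 = i1, j2 = if i2 < t then i2 else t-1, j3 = if t+1 < i3 then i3-2 else t, j4 = i4-2
    have hi3low : t + 1 ≤ i3 := by omega
    -- case distinction facts for j3/j4
    have hright : i3 = t + 1 → (w[t+2]'(by omega) = c ∧ t + 3 ≤ i4) := by
      intro hi3
      have hr : w[t+1]'(by omega) = w[t+2]'(by omega) := hAA t (by omega) hchg
      constructor
      · rw [← hr, hwt1]
      · have hi4 : t + 2 ≤ i4 := by omega
        rcases Nat.lt_or_ge (t+2) i4 with h | h
        · omega
        · exfalso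
          have : i4 = t + 2 := by omega
          rw [gidx (l := w) this, ← hr, hwt1] at g4
          exact oth_ne c g4.symm
    have hluv2 : (w.take t ++ w.drop (t+2)).length = n - 2 := hlenuv
    -- j2
    obtain ⟨j2, hj2a, hj2b, hj2c⟩ :
        ∃ j2, i1 < j2 ∧ j2 + 1 ≤ t ∧ (w.take t ++ w.drop (t+2))[j2]? = some (oth c) := by
      by_cases h : i2 < t
      · refine ⟨i2, h12, by omega, ?_⟩
        rw [List.getElem?_eq_getElem (by omega), trans_low w t (by omega) h, g2]
      · have hi2t : i2 = t := by omega
        refine ⟨t - 1, hi1t hi2t, by omega, ?_⟩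
        rw [List.getElem?_eq_getElem (by omega),
          trans_low w t (by omega) (by omega : t - 1 < t), hleft, hwt]
    -- j3
    obtain ⟨j3, hj3a, hj3b, hj3c⟩ :
        ∃ j3, t ≤ j3 ∧ j3 + 1 ≤ i4 - 2 ∧ (w.take t ++ w.drop (t+2))[j3]? = some c := by
      by_cases h : t + 1 < i3
      · refine ⟨i3 - 2, by omega, by omega, ?_⟩
        rw [List.getElem?_eq_getElem (by omega)]
        have := trans_high w t (by omega) (k := i3) (by omega) (by omega)
          (h2 := by omega)
        rw [this, g3]
      · have hi3t : i3 = t + 1 := by omega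
        obtain ⟨hc2, hi4b⟩ := hright hi3t
        refine ⟨t, le_refl t, by omega, ?_⟩
        rw [List.getElem?_eq_getElem (by omega)]
        rw [gidx (l := w.take t ++ w.drop (t+2)) (show t = t + 2 - 2 by omega)]
        have := trans_high w t (by omega) (k := t + 2) (by omega) (by omega)
          (h2 := by omega)
        rw [this, hc2]
    -- j4
    have hj4c : (w.take t ++ w.drop (t+2))[i4 - 2]? = some (oth c) := by
      rw [List.getElem?_eq_getElem (by omega)]
      have := trans_high w t (by omega) (k := i4) (by omega) (by omega)
        (h2 := by omega)
      rw [this, g4]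
    have hj1c : (w.take t ++ w.drop (t+2))[i1]? = some c := by
      rw [List.getElem?_eq_getElem (by omega), trans_low w t (by omega) (by omega), g1]
    -- apply the induction hypothesis
    obtain ⟨M₁, M₂, hM₁, hM₂, hMne⟩ := IH (n - 2) (by omega)
      (w.take t ++ w.drop (t+2)) hlenuv hbal' c i1 j2 j3 (i4 - 2)
      hj2a (by omega) (by omega) (by omega)
      (e_of_q (by omega) hj1c) (e_of_q (by omega) hj2c)
      (e_of_q (by omega) hj3c) (e_of_q (by omega) hj4c)
    rw [hd]
    exact ⟨liftMat _ _ _ _ hchg M₁, liftMat _ _ _ _ hchg M₂,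
      liftMat_noncross _ _ _ _ hchg M₁ hM₁, liftMat_noncross _ _ _ _ hchg M₂ hM₂,
      liftMat_ne _ _ _ _ hchg hMne⟩

end Main

/-- A balanced single-row bead sequence containing a subsequence red,blue,red,blue or
blue,red,blue,red has at least two distinct non-crossing matchings. -/
theorem stmt2 (w : List Color) (hbal : w.count Color.red = w.count Color.blue)
    (hsub : [Color.red, Color.blue, Color.red, Color.blue].Sublist w ∨
            [Color.blue, Color.red, Color.blue, Color.red].Sublist w) :
    ∃ m₁ m₂ : Matching w, NonCrossing m₁ ∧ NonCrossing m₂ ∧ m₁ ≠ m₂ := by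
  have key : ∀ c : Color, [c, oth c, c, oth c].Sublist w →
      ∃ m₁ m₂ : Matching w, NonCrossing m₁ ∧ NonCrossing m₂ ∧ m₁ ≠ m₂ := by
    intro c hs
    rw [List.sublist_iff_exists_fin_orderEmbedding_get_eq] at hs
    obtain ⟨f, hf⟩ := hs
    have hmono := f.strictMono
    have h01 : f ⟨0, by simp⟩ < f ⟨1, by simp⟩ := hmono (Fin.mk_lt_mk.2 (by norm_num))
    have h12 : f ⟨1, by simp⟩ < f ⟨2, by simp⟩ := hmono (Fin.mk_lt_mk.2 (by norm_num))
    have h23 : f ⟨2, by simp⟩ < f ⟨3, by simp⟩ := hmono (Fin.mk_lt_mk.2 (by norm_num))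
    rw [Fin.lt_def] at h01 h12 h23
    have e0 := hf ⟨0, by simp⟩
    have e1 := hf ⟨1, by simp⟩
    have e2 := hf ⟨2, by simp⟩
    have e3 := hf ⟨3, by simp⟩
    simp only [List.get_eq_getElem] at e0 e1 e2 e3
    exact main' w.length w rfl hbal c (f ⟨0, by simp⟩).1 (f ⟨1, by simp⟩).1
      (f ⟨2, by simp⟩).1 (f ⟨3, by simp⟩).1 h01 h12 h23 (f ⟨3, by simp⟩).isLt
      e0.symm e1.symm e2.symm e3.symm
  rcases hsub with h | h
  · exact key Color.red h
  · exact key Color.blue h
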